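/- arXiv:1901.00118 — 2 statements merged into one kernel-verified Lean document; each statement's English description precedes it below -/
import Mathlib

section
/- For every odd prime q and every positive integer m, the set of prime numbers l such that m divides l - 1 and the q-adic valuation of l - 1 equals the q-adic valuation of m is infinite. -/
lemma padic_eq_aux {q n e : ℕ} (hq : q.Prime) (hn : n ≠ 0) (h1 : q ^ e ∣ n)
    (h2 : ¬ q ^ (e + 1) ∣ n) : padicValNat q n = e := by
  have := Fact.mk hq
  have hf : n.factorization q = padicValNat q n := Nat.factorization_def n hq
  have hle : e ≤ n.factorization q := (Nat.Prime.pow_dvd_iff_le_factorization hq hn).mp h1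
  have hlt : ¬ (e + 1 ≤ n.factorization q) := fun h =>
    h2 ((Nat.Prime.pow_dvd_iff_le_factorization hq hn).mpr h)
  omega

/-- For every odd prime `q` and every positive integer `m`, the set of prime numbers `l`
such that `m` divides `l - 1` and the `q`-adic valuation of `l - 1` equals the `q`-adic
valuation of `m` is infinite. -/
theorem stmt_2 (q m : ℕ) (hq : q.Prime) (hq_odd : Odd q) (hm : 0 < m) :
    {l : ℕ | l.Prime ∧ m ∣ l - 1 ∧ padicValNat q (l - 1) = padicValNat q m}.Infinite := by
  have := Fact.mk hq
  set e := padicValNat q m with he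
  have hqe : q ^ e ∣ m := pow_padicValNat_dvd
  have hqe1 : ¬ q ^ (e + 1) ∣ m := pow_succ_padicValNat_not_dvd hm.ne'
  have hq2le : 2 ≤ q := hq.two_le
  -- choose k ∈ {1, 2} with q ∤ k*m + 1
  obtain ⟨k, hk0, hkq, hak⟩ : ∃ k : ℕ, 0 < k ∧ ¬ q ∣ k ∧ ¬ q ∣ k * m + 1 := by
    by_cases h1 : q ∣ m + 1
    · refine ⟨2, by norm_num, fun h2 => ?_, fun h => ?_⟩
      · have hq2 := (Nat.prime_dvd_prime_iff_eq hq Nat.prime_two).mp h2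
        rw [Nat.odd_iff] at hq_odd; omega
      · have hd : q ∣ 2 * (m + 1) - (2 * m + 1) := Nat.dvd_sub (h1.mul_left 2) h
        have h1' : 2 * (m + 1) - (2 * m + 1) = 1 := by omega
        rw [h1'] at hd
        exact absurd (Nat.le_of_dvd one_pos hd) (by omega)
    · exact ⟨1, one_pos, fun h => absurd (Nat.le_of_dvd one_pos h) (by omega), by
        simpa using h1⟩
  set a := k * m + 1 with ha
  have ha1 : 2 ≤ a := by nlinarith
  -- a coprime to q*m
  have hcm : a.Coprime m := by
    rw [ha, Nat.add_comm]
    exact (Nat.coprime_add_mul_right_left 1 m k).mpr (Nat.coprime_one_left m)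
  have hcq : a.Coprime q := (Nat.coprime_comm.mp (hq.coprime_iff_not_dvd.mpr hak))
  have hc : a.Coprime (q * m) := Nat.Coprime.mul_right hcq hcm
  have hN : NeZero (q * m) := ⟨Nat.mul_ne_zero hq.pos.ne' hm.ne'⟩
  have hdir := Nat.infinite_setOfPred_prime_and_eq_mod
    ((ZMod.isUnit_iff_coprime a (q * m)).mpr hc)
  -- valuation facts about a - 1 = k * m
  have hkm0 : k * m ≠ 0 := by positivity
  have h1a : q ^ e ∣ k * m := hqe.mul_left k
  have h2a : ¬ q ^ (e + 1) ∣ k * m := by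
    intro h
    exact hqe1 ((Nat.Coprime.pow_left (e + 1) (hq.coprime_iff_not_dvd.mpr hkq)).dvd_of_dvd_mul_left h)
  have hq1m : q ^ (e + 1) ∣ q * m := by
    rw [pow_succ, mul_comm (q ^ e) q]
    exact Nat.mul_dvd_mul_left q hqe
  apply Set.Infinite.mono (s := {p : ℕ | p.Prime ∧ (p : ZMod (q * m)) = (a : ZMod (q * m))} \ {p | p ≤ a})
  · rintro l ⟨⟨hlp, hlmod⟩, hla⟩
    simp only [Set.mem_setOf_eq, not_le] at hla
    have hmodeq : l ≡ a [MOD q * m] := (ZMod.natCast_eq_natCast_iff _ _ _).mp hlmod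
    have hdvd : q * m ∣ l - a := (Nat.modEq_iff_dvd' hla.le).mp hmodeq.symm
    have hsplit : l - 1 = k * m + (l - a) := by omega
    refine ⟨hlp, ?_, ?_⟩
    · rw [hsplit]
      exact Nat.dvd_add (dvd_mul_left m k) ((Dvd.intro_left q rfl).trans hdvd)
    · refine padic_eq_aux hq (by omega) ?_ ?_
      · rw [hsplit]
        exact Nat.dvd_add h1a ((hqe.mul_left q).trans hdvd)
      · rw [hsplit]
        intro h
        rw [Nat.add_comm (k * m)] at h
        exact h2a ((Nat.dvd_add_right (hq1m.trans hdvd)).mp h)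
  · exact hdir.diff (Set.finite_le_nat a)
end

section
/- Let q be an odd prime, m a positive integer, and x a nonzero element of the ring ℤ_q of q-adic integers. Then there exists an infinite set Λ of prime numbers such that for every l ∈ Λ, m divides l - 1 and the q-adic norm of (l - 1)·x equals q^{-c}·‖x‖, where c is the q-adic valuation of m. In particular, 0 is not an adherent point of the set {(l - 1)·x : l ∈ Λ} in ℤ_q. -/
private lemma norm_natCast_padic (q : ℕ) [Fact q.Prime] (n : ℕ) (hn : n ≠ 0) :
    ‖(n : ℤ_[q])‖ = (q : ℝ) ^ (-(padicValNat q n : ℤ)) := by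
  have h : ((n : ℤ_[q]) : ℚ_[q]) = (n : ℚ_[q]) := by push_cast; ring
  rw [PadicInt.norm_def, h, Padic.norm_eq_zpow_neg_valuation (by exact_mod_cast hn),
    Padic.valuation_natCast]

/-- Let `q` be an odd prime, `m` a positive integer, and `x` a nonzero element of the ring
`ℤ_[q]` of `q`-adic integers. Then there exists an infinite set `Λ` of prime numbers such
that for every `l ∈ Λ`, `m` divides `l - 1` and the `q`-adic norm of `(l - 1) • x` equals
`q ^ (-c) * ‖x‖` where `c` is the `q`-adic valuation of `m`. In particular, `0` is not an
adherent point of the set `{(l - 1) • x : l ∈ Λ}` in `ℤ_[q]`. -/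
theorem stmt_5 (q m : ℕ) [Fact q.Prime] (hq_odd : Odd q) (hm : 0 < m)
    (x : ℤ_[q]) (hx : x ≠ 0) :
    ∃ Λ : Set ℕ, Λ.Infinite ∧
      (∀ l ∈ Λ, l.Prime ∧ m ∣ l - 1 ∧
        ‖((l : ℤ_[q]) - 1) * x‖ = (q : ℝ) ^ (-(padicValNat q m : ℤ)) * ‖x‖) ∧
      (0 : ℤ_[q]) ∉ closure ((fun l : ℕ => ((l : ℤ_[q]) - 1) * x) '' Λ) := by
  have hqp : q.Prime := Fact.out
  have hq3 : 3 ≤ q := by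
    have h2 : q ≠ 2 := by rintro rfl; rw [Nat.odd_iff] at hq_odd; omega
    have := hqp.two_le
    omega
  -- choose u ∈ {1, 2} with q ∤ 1 + m * u
  obtain ⟨u, hu1, hu2, hu⟩ : ∃ u : ℕ, 1 ≤ u ∧ u ≤ 2 ∧ ¬ q ∣ 1 + m * u := by
    by_cases h1 : q ∣ 1 + m * 1
    · refine ⟨2, by norm_num, by norm_num, fun h2 => ?_⟩
      have hdm : q ∣ m := by
        have h3 := Nat.dvd_sub h2 h1
        have h4 : (1 + m * 2) - (1 + m * 1) = m := by omega
        rwa [h4] at h3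
      have h5 : q ∣ 1 := by
        have := Nat.dvd_sub h1 (hdm.mul_right 1)
        have h6 : (1 + m * 1) - m * 1 = 1 := by omega
        rwa [h6] at this
      have := Nat.le_of_dvd one_pos h5
      omega
    · exact ⟨1, le_refl 1, by norm_num, h1⟩
  set a : ℕ := 1 + m * u with ha
  set N : ℕ := q * m with hN
  have hN0 : N ≠ 0 := by positivity
  have : NeZero N := ⟨hN0⟩
  have hcop : Nat.Coprime a N := by
    have h1 : Nat.Coprime a q := Nat.coprime_comm.mp (hqp.coprime_iff_not_dvd.mpr hu)
    have h2 : Nat.Coprime a m := by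
      rw [ha]
      exact (Nat.coprime_add_mul_left_left 1 m u).mpr (Nat.coprime_one_left m)
    exact Nat.Coprime.mul_right h1 h2
  have haunit : IsUnit ((a : ZMod N)) := by
    rw [ZMod.isUnit_iff_coprime]; exact hcop
  set Λ : Set ℕ := {p : ℕ | p.Prime ∧ (p : ZMod N) = (a : ZMod N)} with hΛ
  have key : ∀ l ∈ Λ, l.Prime ∧ m ∣ l - 1 ∧
      ‖((l : ℤ_[q]) - 1) * x‖ = (q : ℝ) ^ (-(padicValNat q m : ℤ)) * ‖x‖ := by
    rintro l ⟨hlp, hl⟩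
    have hdvd : (N : ℤ) ∣ (l : ℤ) - (a : ℤ) := by
      rw [← ZMod.intCast_zmod_eq_zero_iff_dvd]
      push_cast
      rw [hl]; ring
    obtain ⟨k, hk⟩ := hdvd
    have hfact : (l : ℤ) - 1 = (m : ℤ) * ((u : ℤ) + q * k) := by
      have hl' : (l : ℤ) = (a : ℤ) + N * k := by linarith [hk]
      rw [hl', ha, hN]; push_cast; ring
    have hqu : ¬ ((q : ℤ) ∣ ((u : ℤ) + q * k)) := by
      intro h
      have h2 : (q : ℤ) ∣ (u : ℤ) := by
        have := dvd_sub h (Dvd.intro k rfl)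
        simpa using this
      have h3 : q ∣ u := Int.ofNat_dvd.mp h2
      have := Nat.le_of_dvd (by omega) h3
      omega
    constructor
    · exact hlp
    constructor
    · -- m ∣ l - 1 in ℕ
      have hl2 : 2 ≤ l := hlp.two_le
      have hcast : ((l - 1 : ℕ) : ℤ) = (l : ℤ) - 1 := by
        push_cast [Nat.cast_sub (by omega : 1 ≤ l)]; ring
      have : (m : ℤ) ∣ ((l - 1 : ℕ) : ℤ) := by
        rw [hcast, hfact]; exact Dvd.intro _ rfl
      exact_mod_cast this
    · -- norm computation
      have heq : ((l : ℤ_[q]) - 1) = (m : ℤ_[q]) * (((u : ℤ) + q * k : ℤ) : ℤ_[q]) := by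
        have : ((l : ℤ_[q]) - 1) = (((l : ℤ) - 1 : ℤ) : ℤ_[q]) := by push_cast; ring
        rw [this, hfact]; push_cast; ring
      have hnorm1 : ‖(((u : ℤ) + q * k : ℤ) : ℤ_[q])‖ = 1 := by
        refine le_antisymm (PadicInt.norm_le_one _) ?_
        by_contra hlt
        push_neg at hlt
        exact hqu ((PadicInt.norm_int_lt_one_iff_dvd _).mp hlt)
      rw [heq, norm_mul, norm_mul, hnorm1, mul_one,
        norm_natCast_padic q m (by omega)]
  refine ⟨Λ, Nat.infinite_setOfPred_prime_and_eq_mod haunit, key, ?_⟩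
  intro h0
  set r : ℝ := (q : ℝ) ^ (-(padicValNat q m : ℤ)) * ‖x‖ with hr
  have hrpos : 0 < r := by
    apply mul_pos
    · exact zpow_pos (by exact_mod_cast hqp.pos) _
    · simpa [norm_pos_iff] using hx
  rw [Metric.mem_closure_iff] at h0
  obtain ⟨y, hy, hdist⟩ := h0 r hrpos
  obtain ⟨l, hlΛ, rfl⟩ := hy
  have := (key l hlΛ).2.2
  rw [dist_eq_norm, zero_sub, norm_neg, this] at hdist
  exact absurd hdist (lt_irrefl r)
end
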